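/- Let (Ω, μ) be a probability space, λ > 0, and let k : Ω → ℝ^m and l : Ω → ℝ^p be measurable maps with ‖k(x)‖ ≤ C and ‖l(x)‖ ≤ C for all x. Define Σ₁ = ∫ k(x) k(x)ᵀ dμ(x) (an m×m matrix), Σ₂ = ∫ l(x) l(x)ᵀ dμ(x) (a p×p matrix), and the cross-covariance C₁₂ = ∫ k(x) l(x)ᵀ dμ(x) (an m×p matrix). Then Σ₁ + λI and Σ₂ + λI are invertible and ∫∫ ( k(x)ᵀ (Σ₁+λI)⁻¹ k(x') − l(x)ᵀ (Σ₂+λI)⁻¹ l(x') )² dμ(x) dμ(x') = Tr((Σ₁+λI)⁻¹ Σ₁ (Σ₁+λI)⁻¹ Σ₁) + Tr((Σ₂+λI)⁻¹ Σ₂ (Σ₂+λI)⁻¹ Σ₂) − 2 Tr((Σ₁+λI)⁻¹ C₁₂ (Σ₂+λI)⁻¹ C₁₂ᵀ). -/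

import Mathlib

open MeasureTheory Matrix

section Helpers

variable {Ω : Type*} [MeasurableSpace Ω] {μ : Measure Ω} [IsProbabilityMeasure μ]

lemma bdd_int (f g : Ω → ℝ) (hf : Measurable f) (hg : Measurable g) (Cf : ℝ)
    (hCf : ∀ x, |f x| ≤ Cf) (hCg : ∀ x, |g x| ≤ Cf) :
    Integrable (fun x => f x * g x) μ := by
  refine Integrable.mono' (integrable_const (Cf * Cf)) ((hf.mul hg).aestronglyMeasurable) ?_
  filter_upwards with x
  rw [Real.norm_eq_abs, abs_mul]
  exact mul_le_mul (hCf x) (hCg x) (abs_nonneg _) ((abs_nonneg _).trans (hCf x))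

lemma core_int {ι : Type*} [Fintype ι] (f : Ω → ι → ℝ)
    (hInt : ∀ s t, Integrable (fun x => f x s * f x t) μ)
    (g : Matrix ι ι ℝ) (W : Matrix ι ι ℝ) (hW : ∀ s t, W s t = ∫ x, f x s * f x t ∂μ) :
    ∫ x, ∑ s, ∑ t, g s t * (f x s * f x t) ∂μ = ∑ s, ∑ t, g s t * W s t := by
  rw [integral_finset_sum _ (f := fun s x => ∑ t, g s t * (f x s * f x t)) fun s _ => integrable_finset_sum _ fun t _ => (hInt s t).const_mul _]
  refine Finset.sum_congr rfl fun s _ => ?_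
  rw [integral_finset_sum _ fun t _ => (hInt s t).const_mul _]
  exact Finset.sum_congr rfl fun t _ => by rw [integral_const_mul, hW]

lemma dot_int {ι : Type*} [Fintype ι] (f : Ω → ι → ℝ)
    (hInt : ∀ s t, Integrable (fun x => f x s * f x t) μ)
    (W : Matrix ι ι ℝ) (hW : ∀ s t, W s t = ∫ x, f x s * f x t ∂μ) (c d : ι → ℝ) :
    ∫ x, (c ⬝ᵥ f x) * (d ⬝ᵥ f x) ∂μ = c ⬝ᵥ W *ᵥ d := by
  have h1 : ∀ x, (c ⬝ᵥ f x) * (d ⬝ᵥ f x) = ∑ s, ∑ t, (fun s t => c s * d t) s t * (f x s * f x t) := by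
    intro x
    simp only [dotProduct, Finset.sum_mul_sum]
    exact Finset.sum_congr rfl fun s _ => Finset.sum_congr rfl fun t _ => by ring
  simp_rw [h1]
  rw [core_int f hInt (fun s t => c s * d t) W hW]
  simp only [dotProduct, mulVec, Finset.mul_sum]
  exact Finset.sum_congr rfl fun s _ => Finset.sum_congr rfl fun t _ => by ring

lemma dot_mul3 {ι : Type*} [Fintype ι] (u v : ι → ℝ) (M W : Matrix ι ι ℝ) :
    (M *ᵥ u) ⬝ᵥ W *ᵥ (M *ᵥ v) = u ⬝ᵥ (Mᵀ * (W * M)) *ᵥ v := by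
  simp only [Matrix.dotProduct_mulVec, Matrix.vecMul_vecMul, Matrix.vecMul_transpose]
  conv_rhs => rw [← Matrix.vecMul_vecMul, Matrix.vecMul_transpose]

lemma trace_int {ι : Type*} [Fintype ι] (f : Ω → ι → ℝ)
    (hInt : ∀ s t, Integrable (fun x => f x s * f x t) μ)
    (W : Matrix ι ι ℝ) (hW : ∀ s t, W s t = ∫ x, f x s * f x t ∂μ) (N : Matrix ι ι ℝ) :
    ∫ x, f x ⬝ᵥ N *ᵥ f x ∂μ = (N * Wᵀ).trace := by
  have h1 : ∀ x, f x ⬝ᵥ N *ᵥ f x = ∑ s, ∑ t, N s t * (f x s * f x t) := by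
    intro x
    simp only [dotProduct, mulVec, Finset.mul_sum]
    exact Finset.sum_congr rfl fun s _ => Finset.sum_congr rfl fun t _ => by ring
  simp_rw [h1]
  rw [core_int f hInt N W hW]
  simp only [Matrix.trace, Matrix.diag, Matrix.mul_apply, Matrix.transpose_apply]

lemma trace_fromBlocks {ι κ : Type*} [Fintype ι] [Fintype κ]
    (A : Matrix ι ι ℝ) (B : Matrix ι κ ℝ) (C : Matrix κ ι ℝ) (D : Matrix κ κ ℝ) :
    (Matrix.fromBlocks A B C D).trace = A.trace + D.trace := by
  simp [Matrix.trace, Matrix.diag, Fintype.sum_sum_type, Matrix.fromBlocks]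

lemma dot_sum_elim {ι κ : Type*} [Fintype ι] [Fintype κ]
    (a b : ι → ℝ) (c d : κ → ℝ) :
    Sum.elim a c ⬝ᵥ Sum.elim b d = a ⬝ᵥ b + c ⬝ᵥ d := by
  simp [dotProduct, Fintype.sum_sum_type]

end Helpers

theorem stmt_2 {Ω : Type*} [MeasurableSpace Ω] (μ : Measure Ω) [IsProbabilityMeasure μ]
    (lam : ℝ) (hlam : 0 < lam)
    {m p : ℕ} (k : Ω → EuclideanSpace ℝ (Fin m)) (l : Ω → EuclideanSpace ℝ (Fin p))
    (hk : Measurable k) (hl : Measurable l)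
    (C : ℝ) (hkC : ∀ x, ‖k x‖ ≤ C) (hlC : ∀ x, ‖l x‖ ≤ C)
    (S1 : Matrix (Fin m) (Fin m) ℝ) (hS1 : ∀ i j, S1 i j = ∫ x, k x i * k x j ∂μ)
    (S2 : Matrix (Fin p) (Fin p) ℝ) (hS2 : ∀ i j, S2 i j = ∫ x, l x i * l x j ∂μ)
    (C12 : Matrix (Fin m) (Fin p) ℝ) (hC12 : ∀ i j, C12 i j = ∫ x, k x i * l x j ∂μ) :
    IsUnit (S1 + lam • 1) ∧ IsUnit (S2 + lam • 1) ∧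
    (∫ x, ∫ x', ((fun i => k x i) ⬝ᵥ (S1 + lam • 1)⁻¹.mulVec (fun i => k x' i)
        - (fun i => l x i) ⬝ᵥ (S2 + lam • 1)⁻¹.mulVec (fun i => l x' i)) ^ 2 ∂μ ∂μ) =
      ((S1 + lam • 1)⁻¹ * S1 * (S1 + lam • 1)⁻¹ * S1).trace
        + ((S2 + lam • 1)⁻¹ * S2 * (S2 + lam • 1)⁻¹ * S2).trace
        - 2 * ((S1 + lam • 1)⁻¹ * C12 * (S2 + lam • 1)⁻¹ * C12ᵀ).trace := by
  -- component bounds and measurability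
  have hkm : ∀ i, Measurable fun x => k x i := fun i => (measurable_pi_apply i).comp ((WithLp.measurable_ofLp _ _).comp hk)
  have hlm : ∀ j, Measurable fun x => l x j := fun j => (measurable_pi_apply j).comp ((WithLp.measurable_ofLp _ _).comp hl)
  have habs : ∀ {n : ℕ} (v : EuclideanSpace ℝ (Fin n)) (i : Fin n), |v i| ≤ ‖v‖ := by
    intro n v i
    rw [EuclideanSpace.norm_eq, ← Real.sqrt_sq_eq_abs]
    apply Real.sqrt_le_sqrt
    simpa [sq_abs] using
      Finset.single_le_sum (f := fun j => ‖v j‖ ^ 2) (fun j _ => sq_nonneg _) (Finset.mem_univ i)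
  have hkb : ∀ i x, |k x i| ≤ C := fun i x => (habs (k x) i).trans (hkC x)
  have hlb : ∀ j x, |l x j| ≤ C := fun j x => (habs (l x) j).trans (hlC x)
  -- the combined feature map
  set w : Ω → (Fin m ⊕ Fin p) → ℝ := fun y => Sum.elim (fun i => k y i) (fun j => l y j) with hw
  have hwm : ∀ s, Measurable fun x => w x s := by
    rintro (i | j)
    · exact hkm i
    · exact hlm j
  have hwb : ∀ s x, |w x s| ≤ C := by rintro (i | j) x <;> simp [hw, hkb, hlb]
  have hInt : ∀ s t, Integrable (fun x => w x s * w x t) μ := fun s t =>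
    bdd_int _ _ (hwm s) (hwm t) C (hwb s) (hwb t)
  set W : Matrix (Fin m ⊕ Fin p) (Fin m ⊕ Fin p) ℝ := Matrix.fromBlocks S1 C12 C12ᵀ S2 with hWdef
  have hW : ∀ s t, W s t = ∫ x, w x s * w x t ∂μ := by
    rintro (i | i) (j | j)
    · simpa [hWdef, hw] using hS1 i j
    · simpa [hWdef, hw] using hC12 i j
    · simp only [hWdef, hw, Matrix.fromBlocks_apply₂₁, Matrix.transpose_apply, Sum.elim_inl,
        Sum.elim_inr]
      rw [hC12 j i]
      exact integral_congr_ae (by filter_upwards with x; ring)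
    · simpa [hWdef, hw] using hS2 i j
  -- symmetry
  have hS1s : S1ᵀ = S1 := by
    ext i j
    rw [Matrix.transpose_apply, hS1, hS1]
    exact integral_congr_ae (by filter_upwards with x; ring)
  have hS2s : S2ᵀ = S2 := by
    ext i j
    rw [Matrix.transpose_apply, hS2, hS2]
    exact integral_congr_ae (by filter_upwards with x; ring)
  -- positive semidefiniteness
  have hpsd : ∀ {n : ℕ} (S : Matrix (Fin n) (Fin n) ℝ) (f : Ω → EuclideanSpace ℝ (Fin n)),
      (∀ i, Measurable fun x => f x i) → (∀ i x, |f x i| ≤ C) → Sᵀ = S →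
      (∀ i j, S i j = ∫ x, f x i * f x j ∂μ) → S.PosSemidef := by
    intro n S f hfm hfb hSs hSint
    refine Matrix.PosSemidef.of_dotProduct_mulVec_nonneg ?_ ?_
    · rw [Matrix.IsHermitian]
      ext i j
      simp [Matrix.conjTranspose_apply]
      exact congrFun (congrFun hSs i) j
    · intro v
      have hInt' : ∀ s t, Integrable (fun x => f x s * f x t) μ := fun s t =>
        bdd_int _ _ (hfm s) (hfm t) C (hfb s) (hfb t)
      have := dot_int (fun x i => f x i) hInt' S (fun s t => hSint s t) v v
      rw [show star v = v from rfl, ← this]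
      exact integral_nonneg fun x => mul_self_nonneg _
  have hS1psd : S1.PosSemidef := hpsd S1 k hkm hkb hS1s hS1
  have hS2psd : S2.PosSemidef := hpsd S2 l hlm hlb hS2s hS2
  have hlamPD : ∀ {n : ℕ}, Matrix.PosDef (lam • (1 : Matrix (Fin n) (Fin n) ℝ)) := by
    intro n
    rw [Matrix.smul_one_eq_diagonal]
    exact Matrix.PosDef.diagonal fun i => hlam
  have hPD1 : (S1 + lam • 1).PosDef := Matrix.PosDef.posSemidef_add hS1psd hlamPD
  have hPD2 : (S2 + lam • 1).PosDef := Matrix.PosDef.posSemidef_add hS2psd hlamPD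
  refine ⟨hPD1.isUnit, hPD2.isUnit, ?_⟩
  -- abbreviations
  set A := (S1 + lam • 1)⁻¹ with hAdef
  set B := (S2 + lam • 1)⁻¹ with hBdef
  have hAs : Aᵀ = A := by
    rw [hAdef, Matrix.transpose_nonsing_inv, Matrix.transpose_add, hS1s, Matrix.transpose_smul,
      Matrix.transpose_one]
  have hBs : Bᵀ = B := by
    rw [hBdef, Matrix.transpose_nonsing_inv, Matrix.transpose_add, hS2s, Matrix.transpose_smul,
      Matrix.transpose_one]
  -- the combining matrix
  set M : Matrix (Fin m ⊕ Fin p) (Fin m ⊕ Fin p) ℝ := Matrix.fromBlocks Aᵀ 0 0 (-Bᵀ) with hMdef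
  have hcx : ∀ x, M *ᵥ w x = Sum.elim (Aᵀ *ᵥ fun i => k x i) (-(Bᵀ *ᵥ fun j => l x j)) := by
    intro x
    rw [hMdef, hw]
    rw [Matrix.fromBlocks_mulVec]
    simp [Matrix.neg_mulVec]
  -- pointwise rewrite of the inner integrand
  have hpt : ∀ x x', ((fun i => k x i) ⬝ᵥ A *ᵥ (fun i => k x' i)
      - (fun i => l x i) ⬝ᵥ B *ᵥ (fun i => l x' i)) ^ 2
      = ((M *ᵥ w x) ⬝ᵥ w x') * ((M *ᵥ w x) ⬝ᵥ w x') := by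
    intro x x'
    rw [hcx x, hw]
    rw [dot_sum_elim]
    rw [Matrix.dotProduct_mulVec (fun i => k x i) A, ← Matrix.mulVec_transpose]
    rw [Matrix.dotProduct_mulVec (fun i => l x i) B, ← Matrix.mulVec_transpose]
    rw [neg_dotProduct]
    ring
  -- inner integral
  have hinner : ∀ x, (∫ x', ((fun i => k x i) ⬝ᵥ A *ᵥ (fun i => k x' i)
      - (fun i => l x i) ⬝ᵥ B *ᵥ (fun i => l x' i)) ^ 2 ∂μ)
      = w x ⬝ᵥ (Mᵀ * (W * M)) *ᵥ w x := by
    intro x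
    simp_rw [hpt x]
    rw [dot_int w hInt W hW (M *ᵥ w x) (M *ᵥ w x), dot_mul3]
  have hWs : Wᵀ = W := by
    rw [hWdef, Matrix.fromBlocks_transpose, hS1s, hS2s, Matrix.transpose_transpose]
  calc (∫ x, ∫ x', ((fun i => k x i) ⬝ᵥ A *ᵥ (fun i => k x' i)
        - (fun i => l x i) ⬝ᵥ B *ᵥ (fun i => l x' i)) ^ 2 ∂μ ∂μ)
      = ∫ x, w x ⬝ᵥ (Mᵀ * (W * M)) *ᵥ w x ∂μ :=
        integral_congr_ae (Filter.Eventually.of_forall hinner)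
    _ = ((Mᵀ * (W * M)) * Wᵀ).trace := trace_int w hInt W hW _
    _ = (A * S1 * A * S1).trace + (B * S2 * B * S2).trace
          - 2 * (A * C12 * B * C12ᵀ).trace := by
        rw [hWs]
        have hc : (B * C12ᵀ * (A * C12)).trace = (A * C12 * (B * C12ᵀ)).trace :=
          Matrix.trace_mul_comm _ _
        rw [hMdef, hWdef, hAs, hBs]
        simp only [Matrix.fromBlocks_transpose, Matrix.transpose_neg, Matrix.transpose_zero,
          Matrix.fromBlocks_multiply, hAs, hBs, Matrix.mul_zero, Matrix.zero_mul,
          Matrix.mul_neg, Matrix.neg_mul, neg_neg, add_zero, zero_add,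
          Matrix.add_mul, trace_fromBlocks, Matrix.trace_add, Matrix.trace_neg, Matrix.trace_zero]
        simp only [Matrix.mul_assoc] at hc ⊢
        linarith
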